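/- Let S be an A-algebra which is J-adically separated for an ideal J = (p, d), equipped with a Frobenius lift φ, and write S = ⋃_{ε>0} S_ε where S_ε = {s : γ_ε(s) > −∞} for Gauss norms γ_ε with respect to a presentation by generators x_1,…,x_r. If φ(x_i) = x_i^p + p·δ(x_i) and ε > 0 is chosen so that γ_ε(p·δ(x_i)) > 0 for all i, then φ maps S_ε into S_{ε/p}. -/

import Mathlib

/-- The `J`-adic valuation `v_J(a) = sup {n : a ∈ J^n} ∈ ℕ ∪ {∞}`, viewed in `EReal`. -/
noncomputable def vJ {A : Type*} [CommRing A] (J : Ideal A) (a : A) : EReal :=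
  ⨆ n : {n : ℕ // a ∈ J ^ n}, ((n : ℕ) : EReal)

/-- The Gauss norm `γ_ε(∑_I a_I x^I) = inf_I (v_J(a_I) − ε·|I|)` with respect to a
presentation by generators `x_1, …, x_r` (modelled by power series variables). -/
noncomputable def gaussNorm {A : Type*} [CommRing A] (J : Ideal A) {r : ℕ} (ε : ℝ)
    (f : MvPowerSeries (Fin r) A) : EReal :=
  ⨅ I : Fin r →₀ ℕ,
    (vJ J (MvPowerSeries.coeff (R := A) I f) - ((ε * (I.sum fun _ n => (n : ℝ))) : ℝ))

namespace FrobAux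

open MvPowerSeries

variable {A : Type*} [CommRing A] {r : ℕ}

/-- natural total degree of a monomial exponent -/
def degN (I : Fin r →₀ ℕ) : ℕ := I.sum fun _ n => n

lemma degR_eq (I : Fin r →₀ ℕ) : (I.sum fun _ n => (n : ℝ)) = ((degN I : ℕ) : ℝ) := by
  rw [degN]
  unfold Finsupp.sum
  push_cast
  rfl

lemma degN_add (I K : Fin r →₀ ℕ) : degN (I + K) = degN I + degN K :=
  Finsupp.sum_add_index' (fun _ => rfl) (fun _ _ _ => rfl)

lemma degN_single (i : Fin r) (n : ℕ) : degN (Finsupp.single i n) = n :=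
  Finsupp.sum_single_index rfl

lemma degN_zero : degN (0 : Fin r →₀ ℕ) = 0 := rfl

section vJ

variable {B : Type*} [CommRing B] (J : Ideal B)

lemma le_vJ_of_mem {a : B} {n : ℕ} (h : a ∈ J ^ n) : (n : EReal) ≤ vJ J a :=
  le_iSup_of_le ⟨n, h⟩ le_rfl

lemma vJ_le_of_not_mem {a : B} {m : ℕ} (h : a ∉ J ^ m) :
    vJ J a ≤ (((m : ℝ) - 1 : ℝ) : EReal) := by
  refine iSup_le ?_
  rintro ⟨n, hn⟩
  have hnm : n < m := by
    by_contra hge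
    push_neg at hge
    exact h (Ideal.pow_le_pow_right hge hn)
  have h1 : (n : ℝ) ≤ (m : ℝ) - 1 := by
    have : (n : ℝ) + 1 ≤ (m : ℝ) := by exact_mod_cast hnm
    linarith
  rw [← EReal.coe_coe_eq_natCast]
  exact_mod_cast h1

lemma le_vJ_iff {x : ℝ} {a : B} : (x : EReal) ≤ vJ J a ↔ a ∈ J ^ (⌈x⌉.toNat) := by
  constructor
  · intro h
    by_cases hx : ⌈x⌉.toNat = 0
    · rw [hx, pow_zero, Ideal.one_eq_top]; exact Submodule.mem_top
    · by_contra hmem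
      have h2 := (vJ_le_of_not_mem J hmem)
      have h3 : (x : EReal) ≤ (((⌈x⌉.toNat : ℝ) - 1 : ℝ) : EReal) := h.trans h2
      have h4 : x ≤ (⌈x⌉.toNat : ℝ) - 1 := by exact_mod_cast h3
      have h5 : (⌈x⌉.toNat : ℤ) = ⌈x⌉ := Int.toNat_of_nonneg (by omega)
      have h6 : ((⌈x⌉ : ℤ) : ℝ) < x + 1 := by
        have := Int.ceil_lt_add_one x
        exact_mod_cast this
      have h7 : ((⌈x⌉.toNat : ℕ) : ℝ) = ((⌈x⌉ : ℤ) : ℝ) := by exact_mod_cast h5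
      linarith
  · intro h
    refine le_trans ?_ (le_vJ_of_mem J h)
    have h1 : x ≤ (⌈x⌉.toNat : ℝ) := by
      calc x ≤ ((⌈x⌉ : ℤ) : ℝ) := Int.le_ceil x
        _ ≤ ((⌈x⌉.toNat : ℤ) : ℝ) := by exact_mod_cast Int.self_le_toNat _
        _ = _ := by push_cast; rfl
    rw [← EReal.coe_coe_eq_natCast]
    exact_mod_cast h1

end vJ

section GB

variable (J : Ideal A)

/-- `GB J c ε f` says `γ_ε(f) ≥ c`, coefficientwise. -/
def GB (c ε : ℝ) (f : MvPowerSeries (Fin r) A) : Prop :=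
  ∀ I : Fin r →₀ ℕ,
    MvPowerSeries.coeff (R := A) I f ∈ J ^ (⌈c + ε * ((degN I : ℕ) : ℝ)⌉.toNat)

variable {J}

lemma le_gaussNorm_iff {c ε : ℝ} {f : MvPowerSeries (Fin r) A} :
    (c : EReal) ≤ gaussNorm J ε f ↔ GB J c ε f := by
  rw [_root_.gaussNorm, le_iInf_iff]
  refine forall_congr' fun I => ?_
  rw [EReal.le_sub_iff_add_le (Or.inl (EReal.coe_ne_bot _)) (Or.inl (EReal.coe_ne_top _)),
    ← EReal.coe_add, le_vJ_iff, degR_eq]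

lemma exists_real_le_of_ne_bot {x : EReal} (h : x ≠ ⊥) : ∃ c : ℝ, (c : EReal) ≤ x := by
  induction x with
  | bot => exact absurd rfl h
  | coe c => exact ⟨c, le_rfl⟩
  | top => exact ⟨0, le_top⟩

lemma gaussNorm_ne_bot_iff {ε : ℝ} {f : MvPowerSeries (Fin r) A} :
    gaussNorm J ε f ≠ ⊥ ↔ ∃ c : ℝ, GB J c ε f := by
  constructor
  · intro h
    obtain ⟨c, hc⟩ := exists_real_le_of_ne_bot h
    exact ⟨c, le_gaussNorm_iff.1 hc⟩
  · rintro ⟨c, hc⟩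
    exact ((EReal.bot_lt_coe c).trans_le (le_gaussNorm_iff.2 hc)).ne'

lemma GB.mono_c {c c' ε : ℝ} {f : MvPowerSeries (Fin r) A} (hcc : c' ≤ c)
    (h : GB J c ε f) : GB J c' ε f := by
  intro I
  refine Ideal.pow_le_pow_right ?_ (h I)
  exact Int.toNat_le_toNat (Int.ceil_le_ceil (by linarith))

lemma GB.mono_eps {c ε ε' : ℝ} {f : MvPowerSeries (Fin r) A} (hee : ε' ≤ ε)
    (h : GB J c ε f) : GB J c ε' f := by
  intro I
  refine Ideal.pow_le_pow_right ?_ (h I)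
  refine Int.toNat_le_toNat (Int.ceil_le_ceil ?_)
  have : (0:ℝ) ≤ ((degN I : ℕ) : ℝ) := by positivity
  nlinarith

lemma GB.add {c ε : ℝ} {f g : MvPowerSeries (Fin r) A}
    (hf : GB J c ε f) (hg : GB J c ε g) : GB J c ε (f + g) := by
  intro I
  rw [map_add]
  exact Ideal.add_mem _ (hf I) (hg I)

lemma GB.zero {c ε : ℝ} : GB J c ε (0 : MvPowerSeries (Fin r) A) := by
  intro I
  rw [map_zero]
  exact zero_mem _

lemma GB.one {ε : ℝ} : GB J 0 ε (1 : MvPowerSeries (Fin r) A) := by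
  intro I
  classical
  rw [MvPowerSeries.coeff_one]
  split_ifs with h
  · subst h
    simp only [degN_zero, Nat.cast_zero, mul_zero, add_zero, Int.ceil_zero, Int.toNat_zero,
      pow_zero, Ideal.one_eq_top]
    exact Submodule.mem_top
  · exact zero_mem _

lemma GB.sum {ι : Type*} {c ε : ℝ} (s : Finset ι) (f : ι → MvPowerSeries (Fin r) A)
    (h : ∀ i ∈ s, GB J c ε (f i)) : GB J c ε (∑ i ∈ s, f i) := by
  classical
  induction s using Finset.cons_induction with
  | empty => simpa using GB.zero
  | cons a s ha ih =>
    rw [Finset.sum_cons]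
    exact (h a (Finset.mem_cons_self a s)).add
      (ih fun i hi => h i (Finset.mem_cons_of_mem hi))

lemma toNat_ceil_add_le (x y : ℝ) : (⌈x + y⌉).toNat ≤ (⌈x⌉).toNat + (⌈y⌉).toNat := by
  have h1 : ⌈x + y⌉ ≤ ⌈x⌉ + ⌈y⌉ := Int.ceil_add_le x y
  omega

lemma GB.mul {c₁ c₂ ε : ℝ} {f g : MvPowerSeries (Fin r) A}
    (hf : GB J c₁ ε f) (hg : GB J c₂ ε g) : GB J (c₁ + c₂) ε (f * g) := by
  intro I
  classical
  rw [MvPowerSeries.coeff_mul]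
  refine Ideal.sum_mem _ ?_
  rintro ⟨I₁, I₂⟩ hmem
  rw [Finset.HasAntidiagonal.mem_antidiagonal] at hmem
  have h1 := Ideal.mul_mem_mul (hf I₁) (hg I₂)
  rw [← pow_add] at h1
  refine Ideal.pow_le_pow_right ?_ h1
  have hd : ((degN I : ℕ) : ℝ) = ((degN I₁ : ℕ) : ℝ) + ((degN I₂ : ℕ) : ℝ) := by
    rw [← hmem, degN_add]; push_cast; ring
  calc ⌈c₁ + c₂ + ε * ((degN I : ℕ) : ℝ)⌉.toNat
      = ⌈(c₁ + ε * ((degN I₁ : ℕ) : ℝ)) + (c₂ + ε * ((degN I₂ : ℕ) : ℝ))⌉.toNat := by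
        rw [hd]; ring_nf
    _ ≤ _ := toNat_ceil_add_le _ _

lemma GB.pow {c ε : ℝ} {f : MvPowerSeries (Fin r) A} (h : GB J c ε f) (k : ℕ) :
    GB J ((k : ℝ) * c) ε (f ^ k) := by
  induction k with
  | zero => simpa using GB.one
  | succ k ih =>
    have e : (((k + 1 : ℕ)) : ℝ) * c = (k : ℝ) * c + c := by push_cast; ring
    rw [e, pow_succ]
    exact ih.mul h

lemma GB.prod {ι : Type*} {ε : ℝ} (s : Finset ι) (cs : ι → ℝ)
    (fs : ι → MvPowerSeries (Fin r) A) (h : ∀ i ∈ s, GB J (cs i) ε (fs i)) :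
    GB J (∑ i ∈ s, cs i) ε (∏ i ∈ s, fs i) := by
  classical
  induction s using Finset.cons_induction with
  | empty => simpa using GB.one
  | cons a s ha ih =>
    rw [Finset.sum_cons, Finset.prod_cons]
    exact (h a (Finset.mem_cons_self a s)).mul
      (ih fun i hi => h i (Finset.mem_cons_of_mem hi))

lemma GB.C {x ε : ℝ} {a : A} (h : a ∈ J ^ (⌈x⌉.toNat)) :
    GB J x ε (MvPowerSeries.C (σ := Fin r) (R := A) a) := by
  intro I
  classical
  rw [MvPowerSeries.coeff_C]
  split_ifs with hI
  · subst hI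
    simpa [degN_zero] using h
  · exact zero_mem _

end GB

section Struct

lemma prod_X_pow (K : Fin r →₀ ℕ) :
    (∏ i, (MvPowerSeries.X i : MvPowerSeries (Fin r) A) ^ (K i)) =
      MvPowerSeries.monomial (R := A) K 1 := by
  classical
  have h : ∀ s : Finset (Fin r),
      (∏ i ∈ s, (MvPowerSeries.X i : MvPowerSeries (Fin r) A) ^ (K i)) =
        MvPowerSeries.monomial (R := A) (∑ i ∈ s, Finsupp.single i (K i)) 1 := by
    intro s
    induction s using Finset.cons_induction with
    | empty => simp [MvPowerSeries.monomial_zero_one]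
    | cons a s ha ih =>
      rw [Finset.prod_cons, Finset.sum_cons, ih, MvPowerSeries.X_pow_eq,
        MvPowerSeries.monomial_mul_monomial, one_mul]
  rw [h Finset.univ, Finsupp.univ_sum_single]

lemma monomial_eq (K : Fin r →₀ ℕ) (a : A) :
    MvPowerSeries.monomial (R := A) K a =
      MvPowerSeries.C (σ := Fin r) (R := A) a * ∏ i, (MvPowerSeries.X i : MvPowerSeries (Fin r) A) ^ (K i) := by
  rw [prod_X_pow]
  have : (MvPowerSeries.C (σ := Fin r) (R := A) a) = MvPowerSeries.monomial (R := A) 0 a := rfl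
  rw [this, MvPowerSeries.monomial_mul_monomial, zero_add, mul_one]

/-- power series whose coefficients vanish in total degree `< N` lie in `(X₁,…,X_r)^N`. -/
lemma mem_span_X_pow {N : ℕ} (g : MvPowerSeries (Fin r) A)
    (hg : ∀ K : Fin r →₀ ℕ, degN K < N → MvPowerSeries.coeff (R := A) K g = 0) :
    g ∈ (Ideal.span (Set.range (MvPowerSeries.X : Fin r → MvPowerSeries (Fin r) A))) ^ N := by
  induction N generalizing g with
  | zero => rw [pow_zero, Ideal.one_eq_top]; exact Submodule.mem_top
  | succ N ih =>
    classical
    set T : Ideal (MvPowerSeries (Fin r) A) :=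
      Ideal.span (Set.range (MvPowerSeries.X : Fin r → MvPowerSeries (Fin r) A)) with hT
    set gi : Fin r → MvPowerSeries (Fin r) A := fun i =>
      (fun K => if ∀ j, j < i → K j = 0
        then MvPowerSeries.coeff (R := A) (K + Finsupp.single i 1) g else 0 :
        MvPowerSeries (Fin r) A) with hgidef
    have hcoeff_gi : ∀ (i : Fin r) (K : Fin r →₀ ℕ),
        MvPowerSeries.coeff (R := A) K (gi i) =
          if ∀ j, j < i → K j = 0
          then MvPowerSeries.coeff (R := A) (K + Finsupp.single i 1) g else 0 := fun i K => rfl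
    have hterm : ∀ (i : Fin r) (K : Fin r →₀ ℕ),
        MvPowerSeries.coeff (R := A) K (MvPowerSeries.X i * gi i) =
          if Finsupp.single i 1 ≤ K then
            (if ∀ j, j < i → (K - Finsupp.single i 1 : Fin r →₀ ℕ) j = 0
              then MvPowerSeries.coeff (R := A) ((K - Finsupp.single i 1) + Finsupp.single i 1) g else 0)
          else 0 := by
      intro i K
      rw [MvPowerSeries.X_def, MvPowerSeries.coeff_monomial_mul, hcoeff_gi]
      split_ifs with h1 <;> simp
    have key : g = ∑ i : Fin r, MvPowerSeries.X i * gi i := by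
      ext K
      rw [map_sum]
      by_cases hK : K = 0
      · subst hK
        rw [hg 0 (by rw [degN_zero]; omega)]
        refine (Finset.sum_eq_zero fun i _ => ?_).symm
        rw [hterm]
        rw [if_neg]
        intro hle
        have := Finsupp.single_le_iff.1 hle
        simp at this
      · have hex : ∃ i, K i ≠ 0 := by
          by_contra hc
          push_neg at hc
          exact hK (Finsupp.ext fun a => hc a)
        set s : Finset (Fin r) := Finset.univ.filter (fun i => K i ≠ 0) with hs
        have hsne : s.Nonempty := by
          obtain ⟨i, hi⟩ := hex
          exact ⟨i, by simp [hs, hi]⟩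
        set i₀ : Fin r := s.min' hsne with hi₀
        have hi₀mem : K i₀ ≠ 0 := by
          have := s.min'_mem hsne
          simpa [hs] using this
        have hlt : ∀ j, j < i₀ → K j = 0 := by
          intro j hj
          by_contra hc
          have : i₀ ≤ j := s.min'_le j (by simp [hs, hc])
          exact absurd hj (not_lt.2 this)
        rw [Finset.sum_eq_single_of_mem i₀ (Finset.mem_univ i₀)]
        · rw [hterm, if_pos (Finsupp.single_le_iff.2 (Nat.one_le_iff_ne_zero.2 hi₀mem)),
            if_pos, tsub_add_cancel_of_le
              (Finsupp.single_le_iff.2 (Nat.one_le_iff_ne_zero.2 hi₀mem))]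
          intro j hj
          rw [Finsupp.tsub_apply, hlt j hj]
          simp
        · intro j _ hji
          rw [hterm]
          by_cases hle : Finsupp.single j 1 ≤ K
          · rw [if_pos hle, if_neg]
            intro hall
            have h2 := hall i₀
            by_cases hord : i₀ < j
            · have h3 := h2 hord
              rw [Finsupp.tsub_apply, Finsupp.single_apply, if_neg hji] at h3
              simp at h3
              exact hi₀mem h3
            · have hKj : K j ≠ 0 := by
                have := Finsupp.single_le_iff.1 hle
                omega
              have : i₀ ≤ j := s.min'_le j (by simp [hs, hKj])
              have : i₀ = j := le_antisymm this (not_lt.1 hord)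
              exact hji this.symm
          · rw [if_neg hle]
    rw [key]
    refine Ideal.sum_mem _ fun i _ => ?_
    have hgi : gi i ∈ T ^ N := by
      refine ih _ fun K hKd => ?_
      rw [hcoeff_gi]
      split_ifs with hcond
      · refine hg _ ?_
        rw [degN_add, degN_single]
        omega
      · rfl
    have hXi : MvPowerSeries.X i ∈ T := Ideal.subset_span ⟨i, rfl⟩
    have h2 : gi i * MvPowerSeries.X i ∈ T ^ N * T := Ideal.mul_mem_mul hgi hXi
    rw [pow_succ, mul_comm (MvPowerSeries.X i) (gi i)]
    exact h2

end Struct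

section CoeffIdeal

variable (J : Ideal A)

/-- The ideal of power series `g` with `coeff K g ∈ J ^ (N - |K|)` for all `K`. -/
def coeffIdeal (N : ℕ) : Ideal (MvPowerSeries (Fin r) A) where
  carrier := {g | ∀ K : Fin r →₀ ℕ, MvPowerSeries.coeff (R := A) K g ∈ J ^ (N - degN K)}
  add_mem' := by
    intro a b ha hb K
    rw [map_add]
    exact Ideal.add_mem _ (ha K) (hb K)
  zero_mem' := by
    intro K
    rw [map_zero]
    exact zero_mem _
  smul_mem' := by
    intro c x hx K
    rw [smul_eq_mul]
    classical
    rw [MvPowerSeries.coeff_mul]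
    refine Ideal.sum_mem _ ?_
    rintro ⟨K₁, K₂⟩ hmem
    rw [Finset.HasAntidiagonal.mem_antidiagonal] at hmem
    refine Ideal.mul_mem_left _ _ (Ideal.pow_le_pow_right ?_ (hx K₂))
    have : degN K = degN K₁ + degN K₂ := by rw [← hmem, degN_add]
    omega

lemma mem_coeffIdeal {N : ℕ} {g : MvPowerSeries (Fin r) A} :
    g ∈ coeffIdeal J N ↔ ∀ K : Fin r →₀ ℕ, MvPowerSeries.coeff (R := A) K g ∈ J ^ (N - degN K) :=
  Iff.rfl

/-- The "mixed" ideal generated by constants from `J` and the variables. -/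
noncomputable def mixedIdeal : Ideal (MvPowerSeries (Fin r) A) :=
  Ideal.span ((MvPowerSeries.C (σ := Fin r) (R := A) '' (J : Set A)) ∪
    Set.range (MvPowerSeries.X : Fin r → MvPowerSeries (Fin r) A))

lemma mixedIdeal_pow_le (N : ℕ) :
    ((mixedIdeal J : Ideal (MvPowerSeries (Fin r) A))) ^ N ≤ coeffIdeal J N := by
  induction N with
  | zero =>
    intro g _ K
    rw [Nat.zero_sub, pow_zero, Ideal.one_eq_top]
    exact Submodule.mem_top
  | succ N ih =>
    rw [pow_succ']
    refine Ideal.mul_le.2 fun x hx y hy => ?_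
    have hy' : ∀ K : Fin r →₀ ℕ, MvPowerSeries.coeff (R := A) K y ∈ J ^ (N - degN K) := ih hy
    have hspan : mixedIdeal J ≤ (coeffIdeal J (N + 1)).colon ((Ideal.span {y} : Ideal (MvPowerSeries (Fin r) A)) : Set (MvPowerSeries (Fin r) A)) := by
      rw [mixedIdeal]
      refine (Ideal.span_le).2 ?_
      rintro z (⟨a, haJ, rfl⟩ | ⟨i, rfl⟩) <;> rw [SetLike.mem_coe, Ideal.mem_colon_span_singleton]
      · intro K
        rw [MvPowerSeries.coeff_C_mul]
        have h1 := Ideal.mul_mem_mul haJ (hy' K)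
        rw [← pow_succ'] at h1
        exact Ideal.pow_le_pow_right (by omega) h1
      · intro K
        classical
        rw [MvPowerSeries.X_def, MvPowerSeries.coeff_monomial_mul]
        split_ifs with h
        · rw [one_mul]
          refine Ideal.pow_le_pow_right ?_ (hy' (K - Finsupp.single i 1))
          have h2 : (K - Finsupp.single i 1) + Finsupp.single i 1 = K := tsub_add_cancel_of_le h
          have h3 : degN K = degN (K - Finsupp.single i 1) + 1 := by
            conv_lhs => rw [← h2]
            rw [degN_add, degN_single]
          omega
        · exact zero_mem _
    rw [← Ideal.mem_colon_span_singleton]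
    exact hspan hx

lemma C_mem_mixedIdeal {a : A} (ha : a ∈ J) :
    MvPowerSeries.C (σ := Fin r) (R := A) a ∈ mixedIdeal J :=
  Ideal.subset_span (Or.inl ⟨a, ha, rfl⟩)

lemma X_mem_mixedIdeal (i : Fin r) :
    (MvPowerSeries.X i : MvPowerSeries (Fin r) A) ∈ mixedIdeal J :=
  Ideal.subset_span (Or.inr ⟨i, rfl⟩)

end CoeffIdeal

section Decomp

lemma apply_le_degN (K : Fin r →₀ ℕ) (j : Fin r) : K j ≤ degN K := by
  by_cases h : K j = 0
  · omega
  · exact Finset.single_le_sum (f := fun a => K a) (fun _ _ => Nat.zero_le _)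
      (Finsupp.mem_support_iff.2 h)

lemma exists_decomp (f : MvPowerSeries (Fin r) A) (N : ℕ) :
    ∃ (s : Finset (Fin r →₀ ℕ)) (t : MvPowerSeries (Fin r) A),
      f = (∑ K ∈ s, MvPowerSeries.monomial (R := A) K (MvPowerSeries.coeff (R := A) K f)) + t ∧
      ∀ K : Fin r →₀ ℕ, degN K < N → MvPowerSeries.coeff (R := A) K t = 0 := by
  classical
  set b : Fin r →₀ ℕ := Finsupp.equivFunOnFinite.symm (fun _ => N) with hb
  have hbapp : ∀ j, b j = N := fun j => rfl
  set s : Finset (Fin r →₀ ℕ) := Finset.Iic b with hs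
  set g : MvPowerSeries (Fin r) A :=
    ∑ K ∈ s, MvPowerSeries.monomial (R := A) K (MvPowerSeries.coeff (R := A) K f) with hg
  have hcg : ∀ K : Fin r →₀ ℕ,
      MvPowerSeries.coeff (R := A) K g = if K ∈ s then MvPowerSeries.coeff (R := A) K f else 0 := by
    intro K
    rw [hg, map_sum]
    rw [Finset.sum_congr rfl fun L _ => MvPowerSeries.coeff_monomial K L _]
    simp
  refine ⟨s, f - g, by ring, fun K hK => ?_⟩
  have hKs : K ∈ s := by
    rw [hs, Finset.mem_Iic]
    refine Finsupp.le_def.2 fun j => ?_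
    rw [hbapp]
    have := apply_le_degN K j
    omega
  rw [map_sub, hcg, if_pos hKs, sub_self]

end Decomp

end FrobAux

/-- let `φ` be a Frobenius lift on `S` (modelled on power series in the
generators `x_i`, so `φ` fixes constants and `φ(x_i) = x_i^p + p·δ(x_i)`).
If `ε > 0` is chosen so that `γ_ε(p·δ(x_i)) > 0` for all `i`, then `φ` maps
`S_ε = {s : γ_ε(s) > −∞}` into `S_{ε/p}`. -/
theorem frobenius_lift_maps_Seps (p : ℕ) [Fact p.Prime] {A : Type*} [CommRing A] (d : A)
    {r : ℕ}
    (φ : MvPowerSeries (Fin r) A →+* MvPowerSeries (Fin r) A)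
    (hconst : ∀ a : A, φ (MvPowerSeries.C (σ := Fin r) (R := A) a) = MvPowerSeries.C (σ := Fin r) (R := A) a)
    (δ : Fin r → MvPowerSeries (Fin r) A)
    (hX : ∀ i : Fin r,
      φ (MvPowerSeries.X i) = MvPowerSeries.X i ^ p + (p : MvPowerSeries (Fin r) A) * δ i)
    (ε : ℝ) (hε : 0 < ε)
    (hδ : ∀ i : Fin r,
      0 < gaussNorm (Ideal.span {(p : A), d}) ε ((p : MvPowerSeries (Fin r) A) * δ i))
    (f : MvPowerSeries (Fin r) A)
    (hf : gaussNorm (Ideal.span {(p : A), d}) ε f ≠ ⊥) :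
    gaussNorm (Ideal.span {(p : A), d}) (ε / p) (φ f) ≠ ⊥ := by
  classical
  set J : Ideal A := Ideal.span {(p : A), d} with hJ
  have hp : (p : A) ∈ J := Ideal.subset_span (Set.mem_insert _ _)
  have hppos : 0 < (p : ℝ) := by exact_mod_cast (Fact.out : p.Prime).pos
  have hp1 : 1 ≤ (p : ℝ) := by exact_mod_cast (Fact.out : p.Prime).one_lt.le
  rw [FrobAux.gaussNorm_ne_bot_iff] at hf ⊢
  obtain ⟨c, hc⟩ := hf
  refine ⟨c, ?_⟩
  have hφX : ∀ i, FrobAux.GB J (-ε) (ε / p) (φ (MvPowerSeries.X i)) := by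
    intro i
    rw [hX i]
    have h1 : FrobAux.GB J (-ε) (ε / p)
        ((MvPowerSeries.X i : MvPowerSeries (Fin r) A) ^ p) := by
      intro K
      rw [MvPowerSeries.coeff_X_pow]
      split_ifs with h
      · subst h
        have he : -ε + ε / p * ((FrobAux.degN (Finsupp.single i p) : ℕ) : ℝ) = 0 := by
          rw [FrobAux.degN_single]
          field_simp
          ring
        rw [he]
        simp only [Int.ceil_zero, Int.toNat_zero, pow_zero, Ideal.one_eq_top]
        exact Submodule.mem_top
      · exact zero_mem _
    have h2 : FrobAux.GB J (-ε) (ε / p) ((p : MvPowerSeries (Fin r) A) * δ i) := by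
      have h3 : FrobAux.GB J 0 ε ((p : MvPowerSeries (Fin r) A) * δ i) :=
        FrobAux.le_gaussNorm_iff.1 (by rw [EReal.coe_zero]; exact (hδ i).le)
      exact (h3.mono_eps (div_le_self hε.le hp1)).mono_c (by linarith)
    exact h1.add h2
  intro I
  set n : ℕ := ⌈c + ε / p * ((FrobAux.degN I : ℕ) : ℝ)⌉.toNat with hn
  set N : ℕ := n + FrobAux.degN I with hN
  obtain ⟨s, t, hdecomp, ht⟩ := FrobAux.exists_decomp f N
  have hsum : FrobAux.GB J c (ε / p)
      (∑ K ∈ s, φ (MvPowerSeries.monomial (R := A) K (MvPowerSeries.coeff (R := A) K f))) := by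
    refine FrobAux.GB.sum s _ fun K _ => ?_
    rw [FrobAux.monomial_eq K (MvPowerSeries.coeff (R := A) K f), map_mul, hconst, map_prod]
    simp_rw [map_pow]
    have hC : FrobAux.GB J (c + ε * ((FrobAux.degN K : ℕ) : ℝ)) (ε / p)
        (MvPowerSeries.C (σ := Fin r) (R := A) (MvPowerSeries.coeff (R := A) K f)) := FrobAux.GB.C (hc K)
    have hprod : FrobAux.GB J (∑ i : Fin r, ((K i : ℕ) : ℝ) * (-ε)) (ε / p)
        (∏ i : Fin r, (φ (MvPowerSeries.X i)) ^ (K i)) :=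
      FrobAux.GB.prod _ _ _ fun i _ => (hφX i).pow (K i)
    have hmul := hC.mul hprod
    have he : (c + ε * ((FrobAux.degN K : ℕ) : ℝ)) + (∑ i : Fin r, ((K i : ℕ) : ℝ) * (-ε)) = c := by
      have hs2 : ∑ i : Fin r, ((K i : ℕ) : ℝ) = ((FrobAux.degN K : ℕ) : ℝ) := by
        rw [FrobAux.degN, Finsupp.sum_fintype _ _ (fun _ => rfl)]
        push_cast
        rfl
      rw [← Finset.sum_mul, hs2]
      ring
    rwa [he] at hmul
  have htail : MvPowerSeries.coeff (R := A) I (φ t) ∈ J ^ n := by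
    have h1 : t ∈ (Ideal.span (Set.range
        (MvPowerSeries.X : Fin r → MvPowerSeries (Fin r) A))) ^ N :=
      FrobAux.mem_span_X_pow t ht
    have h2 : φ t ∈ (Ideal.map φ (Ideal.span (Set.range
        (MvPowerSeries.X : Fin r → MvPowerSeries (Fin r) A)))) ^ N := by
      rw [← Ideal.map_pow]
      exact Ideal.mem_map_of_mem φ h1
    have h3 : Ideal.map φ (Ideal.span (Set.range
        (MvPowerSeries.X : Fin r → MvPowerSeries (Fin r) A))) ≤ FrobAux.mixedIdeal J := by
      rw [Ideal.map_span]
      refine Ideal.span_le.2 ?_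
      rintro z ⟨w, ⟨i, rfl⟩, rfl⟩
      rw [SetLike.mem_coe, hX i]
      refine Ideal.add_mem _ ?_ ?_
      · exact Ideal.pow_mem_of_mem _ (FrobAux.X_mem_mixedIdeal J i) p (Fact.out : p.Prime).pos
      · have hcast : ((p : ℕ) : MvPowerSeries (Fin r) A) =
            MvPowerSeries.C (σ := Fin r) (R := A) ((p : ℕ) : A) :=
          (map_natCast (MvPowerSeries.C (σ := Fin r) (R := A)) p).symm
        rw [hcast]
        exact Ideal.mul_mem_right _ _ (FrobAux.C_mem_mixedIdeal J hp)
    have h4 : φ t ∈ FrobAux.coeffIdeal J N :=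
      FrobAux.mixedIdeal_pow_le J N (Ideal.pow_right_mono h3 N h2)
    have h5 := (FrobAux.mem_coeffIdeal J).1 h4 I
    have h6 : N - FrobAux.degN I = n := by omega
    rwa [h6] at h5
  have hφf : φ f = (∑ K ∈ s, φ (MvPowerSeries.monomial (R := A) K (MvPowerSeries.coeff (R := A) K f))) + φ t := by
    conv_lhs => rw [hdecomp]
    rw [map_add, map_sum]
  rw [hφf, map_add]
  exact Ideal.add_mem _ (hsum I) htail
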